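/- For all integers n ≥ m ≥ 2, the number of fuzzy bitopological spaces on an n-element set X with membership values in an m-element chain M in which both fuzzy topologies have exactly k = m^n − m^(n−2) open sets is (τᵢ, τⱼ)_F(n, m, k) = (n⁴ − 2n³ + 2n² − n)/2, i.e. it equals T(T+1)/2 with T = n(n−1). -/

import Mathlib

/-- A fuzzy topology on `Fin n` with membership values in the `m`-element chain `Fin m`:
a collection of fuzzy sets (functions `Fin n → Fin m`) containing the constant function
with the least value, the constant function with the greatest value, and closed under
pointwise (binary) supremum and infimum. -/
def IsFuzzyTopology {n m : ℕ} (hm : m ≠ 0) (τ : Finset (Fin n → Fin m)) : Prop :=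
  (fun _ => (⟨0, Nat.pos_of_ne_zero hm⟩ : Fin m)) ∈ τ ∧
  (fun _ => (⟨m - 1, by omega⟩ : Fin m)) ∈ τ ∧
  (∀ f ∈ τ, ∀ g ∈ τ, f ⊔ g ∈ τ) ∧
  (∀ f ∈ τ, ∀ g ∈ τ, f ⊓ g ∈ τ)

/-- `tauF n m k hm` is the number of fuzzy topologies on an `n`-element set with values in an
`m`-element chain having exactly `k` open sets. -/
noncomputable def tauF (n m k : ℕ) (hm : m ≠ 0) : ℕ :=
  Nat.card {τ : Finset (Fin n → Fin m) // IsFuzzyTopology hm τ ∧ τ.card = k}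

/-- `biTauF n m k hm` is the number of fuzzy bitopological spaces (unordered pairs of fuzzy
topologies, allowing equal ones) on an `n`-element set with values in an `m`-element chain in
which both topologies have exactly `k` open sets. -/
noncomputable def biTauF (n m k : ℕ) (hm : m ≠ 0) : ℕ :=
  Nat.card (Sym2 {τ : Finset (Fin n → Fin m) // IsFuzzyTopology hm τ ∧ τ.card = k})

namespace FuzzyAux

open Finset

variable {n m : ℕ}

/-- number of functions with prescribed values on a finset of coordinates -/
lemma card_filter_eqOn (s : Finset (Fin n)) (g0 : Fin n → Fin m) :
    (Finset.univ.filter fun f : Fin n → Fin m => ∀ x ∈ s, f x = g0 x).card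
      = m ^ (n - s.card) := by
  classical
  have h := Finset.card_bij'
    (s := Finset.univ.filter fun f : Fin n → Fin m => ∀ x ∈ s, f x = g0 x)
    (t := (Finset.univ : Finset ((sᶜ : Finset (Fin n)) → Fin m)))
    (fun f _ => fun x => f x.1)
    (fun g _ => fun x => if hx : x ∈ s then g0 x else g ⟨x, by simpa using hx⟩)
    (fun f hf => Finset.mem_univ _)
    (fun g hg => by
      simp only [Finset.mem_filter, Finset.mem_univ, true_and]
      intro x hx; simp [hx])
    (fun f hf => by
      funext x
      by_cases hx : x ∈ s
      · simp only [Finset.mem_filter, Finset.mem_univ, true_and] at hf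
        simp [hx, (hf x hx).symm]
      · simp [hx])
    (fun g hg => by
      funext x
      rcases x with ⟨x, hx⟩
      have : x ∉ s := by simpa using hx
      simp [this])
  rw [h]
  rw [Finset.card_univ, Fintype.card_fun]
  rw [Fintype.card_fin, Fintype.card_coe, Finset.card_compl, Fintype.card_fin]

/-- the top value of the chain -/
def vt (hm : 2 ≤ m) : Fin m := ⟨m - 1, by omega⟩
/-- the bottom value of the chain -/
def vb (hm : 2 ≤ m) : Fin m := ⟨0, by omega⟩

variable (hm : 2 ≤ m)

lemma le_vt (a : Fin m) : a ≤ vt hm := by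
  rw [Fin.le_def]; have := a.isLt; simp only [vt]; omega

lemma vb_le (a : Fin m) : vb hm ≤ a := by
  rw [Fin.le_def]; simp [vb]

lemma eq_vb_of_le (a : Fin m) (h : a ≤ vb hm) : a = vb hm :=
  le_antisymm h (vb_le hm a)

lemma eq_vt_of_ge (a : Fin m) (h : vt hm ≤ a) : a = vt hm :=
  le_antisymm (le_vt hm a) h

/-- one-coordinate slice count -/
lemma card_slice (i : Fin n) (a : Fin m) :
    (Finset.univ.filter fun f : Fin n → Fin m => f i = a).card = m ^ (n - 1) := by
  classical
  have h := card_filter_eqOn ({i} : Finset (Fin n)) (fun _ => a)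
  simp only [Finset.card_singleton] at h
  rw [← h]
  congr 1
  apply Finset.filter_congr
  intro f _
  simp

/-- two-coordinate block count -/
lemma card_block (i j : Fin n) (hij : i ≠ j) (a b : Fin m) :
    (Finset.univ.filter fun f : Fin n → Fin m => f i = a ∧ f j = b).card
      = m ^ (n - 2) := by
  classical
  have h := card_filter_eqOn ({i, j} : Finset (Fin n)) (fun x => if x = i then a else b)
  rw [Finset.card_insert_of_notMem (by simpa using hij), Finset.card_singleton] at h
  rw [show n - (1+1) = n - 2 from rfl] at h
  rw [← h]
  congr 1
  apply Finset.filter_congr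
  intro f _
  constructor
  · rintro ⟨h1, h2⟩ x hx
    rcases Finset.mem_insert.1 hx with rfl | hx
    · simpa using h1
    · rcases Finset.mem_singleton.1 hx with rfl
      simp only [if_neg (Ne.symm hij)]  -- x = j, j ≠ i
      exact h2
  · intro hf
    constructor
    · have := hf i (by simp); simpa using this
    · have := hf j (by simp); simpa [if_neg (Ne.symm hij)] using this

/-- the standard maximal non-discrete fuzzy topology attached to an ordered pair -/
def stdTop (hm : 2 ≤ m) (i j : Fin n) : Finset (Fin n → Fin m) :=
  Finset.univ.filter fun f => ¬(f i = vt hm ∧ f j = vb hm)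

lemma mem_stdTop {i j : Fin n} {f : Fin n → Fin m} :
    f ∈ stdTop hm i j ↔ ¬(f i = vt hm ∧ f j = vb hm) := by
  simp [stdTop]

lemma stdTop_card (i j : Fin n) (hij : i ≠ j) :
    (stdTop hm i j).card = m ^ n - m ^ (n - 2) := by
  classical
  rw [stdTop, Finset.filter_not, Finset.card_sdiff_of_subset (Finset.filter_subset _ _),
    card_block i j hij, Finset.card_univ, Fintype.card_fun, Fintype.card_fin,
    Fintype.card_fin]

lemma stdTop_isTop (i j : Fin n) : IsFuzzyTopology (Nat.pos_iff_ne_zero.mp (Nat.lt_of_lt_of_le Nat.zero_lt_two hm) : m ≠ 0) (stdTop hm i j) := by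
  classical
  refine ⟨?_, ?_, ?_, ?_⟩
  · rw [mem_stdTop]
    rintro ⟨h1, -⟩
    have : (0 : ℕ) = m - 1 := congrArg Fin.val h1
    omega
  · rw [mem_stdTop]
    rintro ⟨-, h2⟩
    have : (m - 1 : ℕ) = 0 := congrArg Fin.val h2
    omega
  · intro f hf g hg
    rw [mem_stdTop] at hf hg ⊢
    rintro ⟨h1, h2⟩
    rw [Pi.sup_apply] at h1 h2
    have hfj : f j = vb hm := eq_vb_of_le hm _ (h2 ▸ le_sup_left)
    have hgj : g j = vb hm := eq_vb_of_le hm _ (h2 ▸ le_sup_right)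
    rcases max_choice (f i) (g i) with hc | hc
    · exact hf ⟨by rw [← hc]; exact h1, hfj⟩
    · exact hg ⟨by rw [← hc]; exact h1, hgj⟩
  · intro f hf g hg
    rw [mem_stdTop] at hf hg ⊢
    rintro ⟨h1, h2⟩
    rw [Pi.inf_apply] at h1 h2
    have hfi : f i = vt hm := eq_vt_of_ge hm _ (h1 ▸ inf_le_left)
    have hgi : g i = vt hm := eq_vt_of_ge hm _ (h1 ▸ inf_le_right)
    rcases min_choice (f j) (g j) with hc | hc
    · exact hf ⟨hfi, by rw [← hc]; exact h2⟩
    · exact hg ⟨hgi, by rw [← hc]; exact h2⟩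

lemma vt_ne_vb : vt hm ≠ vb hm := by
  intro h
  have : (m - 1 : ℕ) = 0 := congrArg Fin.val h
  omega

theorem structure_thm (hn : 2 ≤ n) (τ : Finset (Fin n → Fin m))
    (ht : IsFuzzyTopology (Nat.pos_iff_ne_zero.mp (Nat.lt_of_lt_of_le Nat.zero_lt_two hm) : m ≠ 0) τ) (hc : τ.card = m ^ n - m ^ (n - 2)) :
    ∃ i j : Fin n, i ≠ j ∧ τ = stdTop hm i j := by
  classical
  obtain ⟨hbot, htop, hsup, hinf⟩ := ht
  have hbot' : (fun _ => vb hm : Fin n → Fin m) ∈ τ := hbot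
  have htop' : (fun _ => vt hm : Fin n → Fin m) ∈ τ := htop
  set C : Finset (Fin n → Fin m) := Finset.univ \ τ with hCdef
  have memC : ∀ f, f ∈ C ↔ f ∉ τ := fun f => by simp [hCdef]
  have cardU : (Finset.univ : Finset (Fin n → Fin m)).card = m ^ n := by
    rw [Finset.card_univ, Fintype.card_fun, Fintype.card_fin, Fintype.card_fin]
  have hle : m ^ (n - 2) ≤ m ^ n := Nat.pow_le_pow_right (by omega) (by omega)
  have cardC : C.card = m ^ (n - 2) := by
    rw [hCdef, Finset.card_sdiff_of_subset (Finset.subset_univ _), cardU, hc]; omega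
  have hCne : C.Nonempty := by
    rw [← Finset.card_pos, cardC]; exact Nat.pow_pos (by omega)
  obtain ⟨p, hpC, hpmin⟩ : ∃ p ∈ C, ∀ x ∈ C, ¬ x < p := by
    obtain ⟨p, hp⟩ := Finset.exists_minimal hCne
    exact ⟨p, hp.prop, fun x hx hlt => hp.not_lt hx hlt⟩
  -- `p` is supported on a single coordinate `i`
  have hpne : p ≠ (fun _ => vb hm) := fun h => ((memC p).1 hpC) (h ▸ hbot')
  have : ∃ i, p i ≠ vb hm := by
    by_contra h; push_neg at h; exact hpne (funext h)
  obtain ⟨i, hpi⟩ := this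
  have hmemτ : ∀ x, x < p → x ∈ τ := by
    intro x hx
    by_contra hh
    exact hpmin x ((memC x).2 hh) hx
  have hsupp : ∀ t, t ≠ i → p t = vb hm := by
    by_contra h; push_neg at h
    obtain ⟨t, hti, hpt⟩ := h
    set p1 : Fin n → Fin m := fun s => if s = t then vb hm else p s with hp1
    set p2 : Fin n → Fin m := fun s => if s = t then p t else vb hm with hp2
    have h1lt : p1 < p := by
      refine lt_iff_le_and_ne.2 ⟨fun s => ?_, fun h => ?_⟩
      · by_cases hs : s = t
        · simp only [hp1, if_pos hs]; exact vb_le hm _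
        · simp only [hp1, if_neg hs]; exact le_refl _
      · have := congrFun h t
        simp only [hp1, if_pos rfl] at this
        exact hpt this.symm
    have h2lt : p2 < p := by
      refine lt_iff_le_and_ne.2 ⟨fun s => ?_, fun h => ?_⟩
      · by_cases hs : s = t
        · simp only [hp2, if_pos hs, hs]; exact le_refl _
        · simp only [hp2, if_neg hs]; exact vb_le hm _
      · have := congrFun h i
        have hit : i ≠ t := fun hh => hti hh.symm
        simp only [hp2, if_neg hit] at this
        exact hpi this.symm
    have hps : p = p1 ⊔ p2 := by
      funext s
      rw [Pi.sup_apply]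
      by_cases hs : s = t
      · subst hs
        simp only [hp1, hp2, if_pos rfl]
        exact (sup_eq_right.2 (vb_le hm _)).symm
      · simp only [hp1, hp2, if_neg hs]
        exact (sup_eq_left.2 (vb_le hm _)).symm
    have : p ∈ τ := hps ▸ hsup p1 (hmemτ p1 h1lt) p2 (hmemτ p2 h2lt)
    exact (memC p).1 hpC this
  -- the join-prime with value `m-1` at `i` is missing from `τ`
  set eI : Fin n → Fin m := fun s => if s = i then vt hm else vb hm with heI
  have hEC : eI ∈ C := by
    rw [memC]
    intro hEτ
    have hslice : (Finset.univ.filter fun y : Fin n → Fin m => y i = p i) ⊆ C := by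
      intro y hy
      rw [Finset.mem_filter] at hy
      rw [memC]
      intro hyτ
      have hmeet : eI ⊓ y = p := by
        funext s
        rw [Pi.inf_apply]
        by_cases hs : s = i
        · subst hs
          simp only [heI, if_pos rfl]
          rw [inf_eq_right.2 (le_vt hm _), hy.2]
        · simp only [heI, if_neg hs]
          rw [inf_eq_left.2 (vb_le hm _), hsupp s hs]
      exact (memC p).1 hpC (hmeet ▸ hinf eI hEτ y hyτ)
    have hcards := Finset.card_le_card hslice
    rw [card_slice, cardC] at hcards
    have : m ^ (n - 2) < m ^ (n - 1) :=
      Nat.pow_lt_pow_right (by omega) (by omega)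
    omega
  -- the meet of all open sets whose `i`-th coordinate is `m-1`
  set K : Finset (Fin n → Fin m) := τ.filter (fun x => x i = vt hm) with hK
  have hKne : K.Nonempty := by
    refine ⟨fun _ => vt hm, ?_⟩
    rw [hK, Finset.mem_filter]
    exact ⟨htop', rfl⟩
  set x0 : Fin n → Fin m := K.inf' hKne id with hx0
  have hx0τ : x0 ∈ τ := by
    apply Finset.inf'_mem (s := {x | x ∈ τ})
    · intro x hx y hy; exact hinf x hx y hy
    · intro b hb; exact (Finset.mem_filter.1 hb).1
  have hx0i : x0 i = vt hm := by
    refine le_antisymm (le_vt hm _) ?_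
    have : x0 i = K.inf' hKne (fun x => x i) := by
      rw [hx0]; exact Finset.inf'_apply ..
    rw [this]
    apply Finset.le_inf'
    intro b hb
    rw [(Finset.mem_filter.1 hb).2]
  have hx0ne : x0 ≠ eI := by
    intro h
    exact (memC eI).1 hEC (h ▸ hx0τ)
  obtain ⟨j, hj⟩ := Function.ne_iff.1 hx0ne
  have hji : j ≠ i := by
    intro h
    subst h
    rw [hx0i] at hj
    simp only [heI, if_pos rfl] at hj
    exact hj rfl
  have hx0j : x0 j ≠ vb hm := by
    simpa only [heI, if_neg hji] using hj
  -- the block attached to `(i, j)` is exactly the complement of `τ`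
  set B : Finset (Fin n → Fin m) :=
    Finset.univ.filter (fun x => x i = vt hm ∧ x j = vb hm) with hB
  have hBC : B ⊆ C := by
    intro x hx
    rw [hB, Finset.mem_filter] at hx
    rw [memC]
    intro hxτ
    have hxK : x ∈ K := by
      rw [hK, Finset.mem_filter]; exact ⟨hxτ, hx.2.1⟩
    have : x0 ≤ x := Finset.inf'_le id hxK
    have : x0 j ≤ x j := this j
    rw [hx.2.2] at this
    exact hx0j (eq_vb_of_le hm _ this)
  have hBeq : B = C := by
    apply Finset.eq_of_subset_of_card_le hBC
    rw [cardC, hB, card_block i j (fun h => hji h.symm)]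
  have hτeq : τ = stdTop hm i j := by
    have h1 : τ = Finset.univ \ C := by
      rw [hCdef, Finset.sdiff_sdiff_self_left, Finset.inter_eq_right.2 (Finset.subset_univ _)]
    rw [h1, ← hBeq, hB, stdTop, Finset.filter_not]
  exact ⟨i, j, fun h => hji h.symm, hτeq⟩

lemma stdTop_inj {i j i' j' : Fin n} (hij : i ≠ j) (hij' : i' ≠ j')
    (h : stdTop hm i j = stdTop hm i' j') : i = i' ∧ j = j' := by
  classical
  have hvt := vt_ne_vb hm
  -- first witness: m-1 at i, 0 elsewhere
  set χ : Fin n → Fin m := fun s => if s = i then vt hm else vb hm with hχ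
  have hχ1 : χ ∉ stdTop hm i j := by
    rw [mem_stdTop, not_not]
    refine ⟨by simp [hχ], ?_⟩
    show (if j = i then vt hm else vb hm) = vb hm
    rw [if_neg (fun hh => hij hh.symm)]
  have hχ2' : χ ∉ stdTop hm i' j' := h ▸ hχ1
  rw [mem_stdTop, not_not] at hχ2'
  have hii : i' = i := by
    by_contra hii
    have := hχ2'.1
    simp only [hχ, if_neg hii] at this
    exact hvt this.symm
  -- second witness: 0 at j, m-1 elsewhere
  set ψ : Fin n → Fin m := fun s => if s = j then vb hm else vt hm with hψ
  have hψ1 : ψ ∉ stdTop hm i j := by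
    rw [mem_stdTop, not_not]
    refine ⟨?_, by simp [hψ]⟩
    show (if i = j then vb hm else vt hm) = vt hm
    rw [if_neg hij]
  have hψ2' : ψ ∉ stdTop hm i' j' := h ▸ hψ1
  rw [mem_stdTop, not_not] at hψ2'
  have hjj : j' = j := by
    by_contra hjj
    have := hψ2'.2
    simp only [hψ, if_neg hjj] at this
    exact hvt this
  exact ⟨hii.symm, hjj.symm⟩

lemma count_pairs : Nat.card {p : Fin n × Fin n // p.1 ≠ p.2} = n * n - n := by
  classical
  rw [Nat.card_eq_fintype_card]
  have h1 : Fintype.card {p : Fin n × Fin n // ¬ p.1 = p.2}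
      = Fintype.card (Fin n × Fin n) - Fintype.card {p : Fin n × Fin n // p.1 = p.2} :=
    Fintype.card_subtype_compl _
  have h2 : Fintype.card {p : Fin n × Fin n // p.1 = p.2} = n := by
    have e : {p : Fin n × Fin n // p.1 = p.2} ≃ Fin n :=
      { toFun := fun p => p.1.1
        invFun := fun a => ⟨(a, a), rfl⟩
        left_inv := by rintro ⟨⟨a, b⟩, hab⟩; cases hab; rfl
        right_inv := fun a => rfl }
    rw [Fintype.card_congr e, Fintype.card_fin]
  have h3 : Fintype.card {p : Fin n × Fin n // p.1 ≠ p.2}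
      = Fintype.card {p : Fin n × Fin n // ¬ p.1 = p.2} := rfl
  rw [h3, h1, h2, Fintype.card_prod, Fintype.card_fin]

lemma count_tau (hm : 2 ≤ m) (hn : 2 ≤ n) (hm0 : m ≠ 0) :
    Nat.card {τ : Finset (Fin n → Fin m) //
      IsFuzzyTopology hm0 τ ∧ τ.card = m ^ n - m ^ (n - 2)} = n * n - n := by
  classical
  have hbij : Function.Bijective
      (fun p : {p : Fin n × Fin n // p.1 ≠ p.2} =>
        (⟨stdTop hm p.1.1 p.1.2, stdTop_isTop hm p.1.1 p.1.2,
            stdTop_card hm p.1.1 p.1.2 p.2⟩ :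
          {τ : Finset (Fin n → Fin m) //
            IsFuzzyTopology hm0 τ ∧ τ.card = m ^ n - m ^ (n - 2)})) := by
    constructor
    · rintro ⟨⟨i, j⟩, hij⟩ ⟨⟨i', j'⟩, hij'⟩ hval
      have := stdTop_inj hm hij hij' (congrArg Subtype.val hval)
      simp only [Subtype.mk.injEq, Prod.mk.injEq]
      exact this
    · rintro ⟨τ, hτ, hc⟩
      obtain ⟨i, j, hij, heq⟩ := structure_thm hm hn τ hτ hc
      exact ⟨⟨(i, j), hij⟩, by simp [heq]⟩
  rw [← Nat.card_eq_of_bijective _ hbij, count_pairs]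

end FuzzyAux

open FuzzyAux

theorem biTauF_maximal_nondiscrete (n m : ℕ) (hm : 2 ≤ m) (hnm : m ≤ n) :
    (biTauF n m (m ^ n - m ^ (n - 2)) (by omega) : ℤ) =
      ((n : ℤ) ^ 4 - 2 * (n : ℤ) ^ 3 + 2 * (n : ℤ) ^ 2 - (n : ℤ)) / 2 := by
  classical
  have hn : 2 ≤ n := le_trans hm hnm
  rw [biTauF]
  set S := {τ : Finset (Fin n → Fin m) //
    IsFuzzyTopology (by omega : m ≠ 0) τ ∧ τ.card = m ^ n - m ^ (n - 2)} with hS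
  haveI : Fintype S := Fintype.ofFinite S
  have hcardS : Fintype.card S = n * n - n := by
    rw [← Nat.card_eq_fintype_card]
    exact count_tau hm hn (by omega)
  rw [Nat.card_eq_fintype_card, Sym2.card, hcardS, Nat.choose_two_right]
  have h1 : n * n - n + 1 - 1 = n * n - n := by omega
  rw [h1, Int.natCast_div]
  have hnum : (((n * n - n + 1) * (n * n - n) : ℕ) : ℤ)
      = (n : ℤ) ^ 4 - 2 * (n : ℤ) ^ 3 + 2 * (n : ℤ) ^ 2 - (n : ℤ) := by
    have hle : n ≤ n * n := Nat.le_mul_of_pos_left n (by omega)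
    push_cast [Nat.cast_sub hle]
    ring
  rw [hnum]
  norm_num
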